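/- Let (β_n) be a sequence of positive reals with n² β_n → ∞ and n β_n → 0 as n → ∞, and let (z_n) be a sequence of reals with z_n → ∞ and β_n log z_n → 0. Define S_n(z_n) := Σ_{i=1}^{n} Q( i β_n/2 , z_n²/2 ), where Q(a,z) = (1/Γ(a)) ∫_z^∞ t^{a−1} e^{−t} dt, and Λ_n := n( (z_n²/2)^{β_n/2} − 1 ) (z_n²/2)^{n β_n/2} − (z_n²/2)^{n β_n/2} + 1. Then S_n(z_n) is asymptotically equivalent to ( 4 e^{−z_n²/2} / z_n² ) · Λ_n / ( β_n log²(z_n²/2) ), i.e. the ratio of the two quantities converges to 1 as n → ∞. -/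

import Mathlib

open Filter Real

/-- The regularized upper incomplete Gamma function
`Q(a,z) = (1/Γ(a)) ∫_z^∞ t^(a-1) e^(-t) dt`. -/
noncomputable def regIncGamma (a z : ℝ) : ℝ :=
  (1 / Real.Gamma a) * ∫ t in Set.Ioi z, t ^ (a - 1) * Real.exp (-t)

open Set MeasureTheory
set_option maxHeartbeats 1000000

lemma geom_aux (r : ℝ) (n : ℕ) :
    (r - 1) ^ 2 * ∑ i ∈ Finset.Icc 1 n, (i : ℝ) * r ^ i
      = r * ((n : ℝ) * r ^ (n + 1) - ((n : ℝ) + 1) * r ^ n + 1) := by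
  induction n with
  | zero => simp
  | succ n ih =>
    rw [Finset.sum_Icc_succ_top (Nat.le_add_left 1 n), mul_add, ih]
    push_cast
    ring

lemma gamma_le_one {a : ℝ} (h0 : 0 ≤ a) (h1 : a ≤ 1) : Real.Gamma (1 + a) ≤ 1 := by
  have hc := Real.convexOn_Gamma.2 (mem_Ioi.2 one_pos) (mem_Ioi.2 two_pos)
    (sub_nonneg.2 h1) h0 (by ring)
  have h2 : Real.Gamma 2 = 1 := by
    rw [show (2:ℝ) = 1 + 1 by norm_num, Real.Gamma_add_one one_ne_zero, Real.Gamma_one]; ring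
  simp only [smul_eq_mul] at hc
  calc Real.Gamma (1 + a) = Real.Gamma ((1-a)*1 + a*2) := by ring_nf
    _ ≤ (1-a) * Real.Gamma 1 + a * Real.Gamma 2 := hc
    _ = 1 := by rw [Real.Gamma_one, h2]; ring

lemma one_le_gamma_mul {a : ℝ} (h0 : 0 < a) (h1 : a ≤ 1/2) :
    1 ≤ Real.Gamma (1 + a) * (1 + 2 * a) := by
  have hs : 0 < Real.sin (π * a) := Real.sin_pos_of_pos_of_lt_pi (by positivity)
    (by nlinarith [Real.pi_gt_three])
  have hrefl := Real.Gamma_mul_Gamma_one_sub a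
  have hadd : Real.Gamma (1 + a) = a * Real.Gamma a := by
    rw [add_comm, Real.Gamma_add_one h0.ne']
  have h1' : 1 ≤ Real.Gamma (1 + a) * Real.Gamma (1 - a) := by
    rw [hadd, mul_assoc, hrefl, ← mul_div_assoc, le_div_iff₀ hs, one_mul]
    calc Real.sin (π * a) ≤ π * a := Real.sin_le (by positivity)
      _ = a * π := mul_comm _ _
  have h2' : Real.Gamma (1 - a) ≤ 1 + 2 * a := by
    have hc := Real.convexOn_Gamma.2 (mem_Ioi.2 (by norm_num : (0:ℝ) < 1/2))
      (mem_Ioi.2 one_pos) (by linarith : (0:ℝ) ≤ 2*a) (by linarith : (0:ℝ) ≤ 1 - 2*a) (by ring)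
    simp only [smul_eq_mul] at hc
    have he : (2*a) * (1/2 : ℝ) + (1 - 2*a) * 1 = 1 - a := by ring
    rw [he] at hc
    have hpi : Real.Gamma (1/2) ≤ 2 := by
      rw [Real.Gamma_one_half_eq]
      nlinarith [Real.pi_le_four, Real.sq_sqrt Real.pi_pos.le, Real.sqrt_nonneg π]
    calc Real.Gamma (1 - a) ≤ 2*a * Real.Gamma (1/2) + (1 - 2*a) * Real.Gamma 1 := hc
      _ ≤ 2*a*2 + (1-2*a)*1 := by
          rw [Real.Gamma_one]
          nlinarith
      _ ≤ 1 + 2*a := by nlinarith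
  have hg : 0 < Real.Gamma (1 + a) := Real.Gamma_pos_of_pos (by linarith)
  nlinarith

lemma integrableOn_aux {a x : ℝ} (hx : 0 < x) (ha : 0 < a) :
    IntegrableOn (fun t : ℝ => t ^ (a - 1) * Real.exp (-t)) (Ioi x) := by
  have h := (Real.GammaIntegral_convergent ha).mono_set (Ioi_subset_Ioi hx.le)
  exact h.congr_fun (fun t _ => mul_comm _ _) measurableSet_Ioi

lemma integral_upper {a x : ℝ} (hx : 0 < x) (ha : 0 < a) (ha1 : a ≤ 1) :
    (∫ t in Ioi x, t ^ (a - 1) * Real.exp (-t)) ≤ x ^ (a - 1) * Real.exp (-x) := by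
  have h1 : IntegrableOn (fun t : ℝ => Real.exp (-t)) (Ioi x) := by
    simpa using exp_neg_integrableOn_Ioi x one_pos
  calc (∫ t in Ioi x, t ^ (a-1) * Real.exp (-t))
      ≤ ∫ t in Ioi x, x ^ (a-1) * Real.exp (-t) := by
        refine setIntegral_mono_on (integrableOn_aux hx ha) (h1.const_mul _)
          measurableSet_Ioi ?_
        intro t ht
        exact mul_le_mul_of_nonneg_right
          (Real.rpow_le_rpow_of_nonpos hx (le_of_lt ht) (by linarith)) (Real.exp_nonneg _)
    _ = x ^ (a-1) * Real.exp (-x) := by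
        rw [integral_const_mul, integral_exp_neg_Ioi]

lemma integral_lower {a x : ℝ} (hx : Real.exp 1 ≤ x) (ha : 0 < a) (ha1 : a ≤ 1) :
    x ^ (a - 1) * Real.exp (-x) * (x / (x + Real.log x) * (1 - 1/x)) ≤
      ∫ t in Ioi x, t ^ (a - 1) * Real.exp (-t) := by
  have hx1 : 1 < x := lt_of_lt_of_le (by simpa using Real.exp_lt_exp.2 one_pos) hx
  have hx0 : 0 < x := by linarith
  have hlog : 0 < Real.log x := Real.log_pos hx1
  set y := x + Real.log x with hy
  have hxy : x < y := by simp only [hy]; linarith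
  have hy0 : 0 < y := by linarith
  have hIexp : (∫ t in Ioc x y, Real.exp (-t)) = Real.exp (-x) - Real.exp (-y) := by
    have hu : Ioc x y ∪ Ioi y = Ioi x := Ioc_union_Ioi_eq_Ioi hxy.le
    have hd : Disjoint (Ioc x y) (Ioi y) := Ioc_disjoint_Ioi le_rfl
    have hi1 : IntegrableOn (fun t : ℝ => Real.exp (-t)) (Ioi y) := by
      simpa using exp_neg_integrableOn_Ioi y one_pos
    have hi2' : IntegrableOn (fun t : ℝ => Real.exp (-t)) (Ioi x) := by
      simpa using exp_neg_integrableOn_Ioi x one_pos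
    have hi2 : IntegrableOn (fun t : ℝ => Real.exp (-t)) (Ioc x y) :=
      hi2'.mono_set Ioc_subset_Ioi_self
    have hsplit := MeasureTheory.setIntegral_union (f := fun t : ℝ => Real.exp (-t)) (μ := MeasureTheory.volume) hd measurableSet_Ioi hi2 hi1
    rw [hu, integral_exp_neg_Ioi, integral_exp_neg_Ioi] at hsplit
    linarith
  have hfi : IntegrableOn (fun t : ℝ => t ^ (a-1) * Real.exp (-t)) (Ioi x) :=
    integrableOn_aux hx0 ha
  have hstep1 : (∫ t in Ioc x y, t ^ (a-1) * Real.exp (-t))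
      ≤ ∫ t in Ioi x, t ^ (a-1) * Real.exp (-t) := by
    refine setIntegral_mono_set hfi ?_ (HasSubset.Subset.eventuallyLE Ioc_subset_Ioi_self)
    filter_upwards [ae_restrict_mem measurableSet_Ioi] with t ht
    have h0t : (0:ℝ) < t := lt_trans hx0 ht
    positivity
  have hexpIoc' : IntegrableOn (fun t : ℝ => Real.exp (-t)) (Ioi x) := by
    simpa using exp_neg_integrableOn_Ioi x one_pos
  have hexpIoc : IntegrableOn (fun t : ℝ => Real.exp (-t)) (Ioc x y) :=
    hexpIoc'.mono_set Ioc_subset_Ioi_self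
  have hstep2 : y ^ (a-1) * (Real.exp (-x) - Real.exp (-y))
      ≤ ∫ t in Ioc x y, t ^ (a-1) * Real.exp (-t) := by
    rw [← hIexp, ← integral_const_mul]
    refine setIntegral_mono_on
      (hexpIoc.const_mul _)
      (hfi.mono_set Ioc_subset_Ioi_self) measurableSet_Ioc ?_
    intro t ht
    exact mul_le_mul_of_nonneg_right
      (Real.rpow_le_rpow_of_nonpos (lt_trans hx0 ht.1) ht.2 (by linarith))
      (Real.exp_nonneg _)
  have hy_bound : x ^ (a-1) * (x / y) ≤ y ^ (a-1) := by
    rw [Real.rpow_sub_one hy0.ne' a, Real.rpow_sub_one hx0.ne' a]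
    have h2 : x ^ a ≤ y ^ a := Real.rpow_le_rpow hx0.le (by linarith) ha.le
    have he : x ^ a / x * (x / y) = x ^ a / y := by field_simp
    rw [he]
    gcongr
  have hexp_eq : Real.exp (-x) - Real.exp (-y) = Real.exp (-x) * (1 - 1/x) := by
    have hey : Real.exp (-y) = Real.exp (-x) * (1/x) := by
      rw [hy, neg_add, Real.exp_add, Real.exp_neg (Real.log x), Real.exp_log hx0, one_div]
    rw [hey]; ring
  have hnn : 0 ≤ Real.exp (-x) * (1 - 1/x) := by
    have : 1/x ≤ 1 := by rw [div_le_one hx0]; linarith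
    have := Real.exp_nonneg (-x)
    nlinarith
  calc x ^ (a-1) * Real.exp (-x) * (x / y * (1 - 1/x))
      = (x ^ (a-1) * (x / y)) * (Real.exp (-x) * (1 - 1/x)) := by ring
    _ ≤ y ^ (a-1) * (Real.exp (-x) * (1 - 1/x)) :=
        mul_le_mul_of_nonneg_right hy_bound hnn
    _ = y ^ (a-1) * (Real.exp (-x) - Real.exp (-y)) := by rw [hexp_eq]
    _ ≤ ∫ t in Ioc x y, t ^ (a-1) * Real.exp (-t) := hstep2
    _ ≤ _ := hstep1

lemma regIncGamma_bounds {a x : ℝ} (hx : Real.exp 1 ≤ x) (ha : 0 < a) (ha2 : a ≤ 1/2) :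
    x / (x + Real.log x) * (1 - 1/x) * (a * x ^ (a-1) * Real.exp (-x)) ≤ regIncGamma a x ∧
    regIncGamma a x ≤ (1 + 2*a) * (a * x ^ (a-1) * Real.exp (-x)) := by
  have hx1 : 1 < x := lt_of_lt_of_le (by simpa using Real.exp_lt_exp.2 one_pos) hx
  have hx0 : 0 < x := by linarith
  have hlog : 0 < Real.log x := Real.log_pos hx1
  have hGpos : 0 < Real.Gamma (1 + a) := Real.Gamma_pos_of_pos (by linarith)
  have hGa : 0 < Real.Gamma a := Real.Gamma_pos_of_pos ha
  have hinv : 1 / Real.Gamma a = a / Real.Gamma (1 + a) := by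
    rw [add_comm, Real.Gamma_add_one ha.ne']
    field_simp
  have hIpos : 0 ≤ ∫ t in Ioi x, t ^ (a-1) * Real.exp (-t) := by
    refine setIntegral_nonneg measurableSet_Ioi fun t ht => ?_
    have h0t : (0:ℝ) < t := lt_trans hx0 ht
    positivity
  have hinv_lb : a ≤ 1 / Real.Gamma a := by
    rw [hinv, le_div_iff₀ hGpos]
    nlinarith [gamma_le_one ha.le (by linarith : a ≤ 1)]
  have hinv_ub : 1 / Real.Gamma a ≤ a * (1 + 2*a) := by
    rw [hinv, div_le_iff₀ hGpos]
    nlinarith [one_le_gamma_mul ha ha2]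
  constructor
  · calc x / (x + Real.log x) * (1 - 1/x) * (a * x ^ (a-1) * Real.exp (-x))
        = a * (x ^ (a-1) * Real.exp (-x) * (x / (x + Real.log x) * (1 - 1/x))) := by ring
      _ ≤ a * ∫ t in Ioi x, t ^ (a-1) * Real.exp (-t) :=
          mul_le_mul_of_nonneg_left (integral_lower hx ha (by linarith)) ha.le
      _ ≤ regIncGamma a x := mul_le_mul_of_nonneg_right hinv_lb hIpos
  · calc regIncGamma a x
        ≤ a * (1 + 2*a) * ∫ t in Ioi x, t ^ (a-1) * Real.exp (-t) :=
          mul_le_mul_of_nonneg_right hinv_ub hIpos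
      _ ≤ a * (1 + 2*a) * (x ^ (a-1) * Real.exp (-x)) := by
          refine mul_le_mul_of_nonneg_left (integral_upper hx0 ha (by linarith)) ?_
          nlinarith
      _ = (1 + 2*a) * (a * x ^ (a-1) * Real.exp (-x)) := by ring

lemma sum_eq {n : ℕ} {b x : ℝ} (hx0 : 0 < x) (hr : x ^ (b/2) ≠ 1) :
    ∑ i ∈ Finset.Icc 1 n, ((i:ℝ) * b / 2) * x ^ ((i:ℝ)*b/2 - 1) * Real.exp (-x)
      = Real.exp (-x) / x * (b/2) *
        (x ^ (b/2) * ((n:ℝ) * (x ^ (b/2)) ^ (n+1) - ((n:ℝ)+1) * (x ^ (b/2)) ^ n + 1)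
          / (x ^ (b/2) - 1)^2) := by
  have hterm : ∀ i ∈ Finset.Icc 1 n, ((i:ℝ) * b / 2) * x ^ ((i:ℝ)*b/2 - 1) * Real.exp (-x)
      = Real.exp (-x) / x * (b/2) * ((i:ℝ) * (x ^ (b/2)) ^ i) := by
    intro i _
    have h1 : x ^ ((i:ℝ)*b/2 - 1) = (x ^ (b/2)) ^ i / x := by
      rw [Real.rpow_sub hx0, Real.rpow_one]
      congr 1
      rw [show (i:ℝ)*b/2 = b/2 * (i:ℝ) by ring, Real.rpow_mul hx0.le, Real.rpow_natCast]
    rw [h1]; ring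
  rw [Finset.sum_congr rfl hterm, ← Finset.mul_sum]
  congr 1
  rw [eq_div_iff (pow_ne_zero 2 (sub_ne_zero.2 hr))]
  linear_combination geom_aux (x ^ (b/2)) n

/-- **Intermediate asymptotic, valid throughout the regime `1/n² ≪ β ≪ 1/n`:**
if `z_n → ∞` and `β_n log z_n → 0`, then
`S_n(z_n) = Σ_{i=1}^n Q(iβ_n/2, z_n²/2)` is asymptotically equivalent to
`(4 e^{-z_n²/2} / z_n²) · Λ_n / (β_n log²(z_n²/2))` where
`Λ_n = n((z_n²/2)^(β_n/2) − 1)(z_n²/2)^(nβ_n/2) − (z_n²/2)^(nβ_n/2) + 1`. -/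
theorem sum_survival_intermediate_asymptotic (β : ℕ → ℝ) (hβpos : ∀ n, 0 < β n)
    (hβ1 : Tendsto (fun n : ℕ => (n : ℝ) ^ 2 * β n) atTop atTop)
    (hβ2 : Tendsto (fun n : ℕ => (n : ℝ) * β n) atTop (nhds 0))
    (z : ℕ → ℝ) (hz : Tendsto z atTop atTop)
    (hβz : Tendsto (fun n : ℕ => β n * Real.log (z n)) atTop (nhds 0)) :
    Tendsto (fun n : ℕ =>
        (∑ i ∈ Finset.Icc 1 n, regIncGamma ((i : ℝ) * β n / 2) (z n ^ 2 / 2))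
          / (4 * Real.exp (-(z n ^ 2) / 2) / z n ^ 2
              * (((n : ℝ) * ((z n ^ 2 / 2) ^ (β n / 2) - 1) * (z n ^ 2 / 2) ^ ((n : ℝ) * β n / 2)
                    - (z n ^ 2 / 2) ^ ((n : ℝ) * β n / 2) + 1)
                  / (β n * Real.log (z n ^ 2 / 2) ^ 2))))
      atTop (nhds 1) := by
  
  set F := fun n : ℕ =>
        (∑ i ∈ Finset.Icc 1 n, regIncGamma ((i : ℝ) * β n / 2) (z n ^ 2 / 2))
          / (4 * Real.exp (-(z n ^ 2) / 2) / z n ^ 2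
              * (((n : ℝ) * ((z n ^ 2 / 2) ^ (β n / 2) - 1) * (z n ^ 2 / 2) ^ ((n : ℝ) * β n / 2)
                    - (z n ^ 2 / 2) ^ ((n : ℝ) * β n / 2) + 1)
                  / (β n * Real.log (z n ^ 2 / 2) ^ 2))) with hF
  set e : ℕ → ℝ := fun n => β n / 2 * Real.log (z n ^ 2 / 2) with he
  set g : ℕ → ℝ := fun n => Real.exp (e n) * e n ^ 2 / (Real.exp (e n) - 1) ^ 2 with hg
  set m : ℕ → ℝ := fun n =>
    (z n ^ 2 / 2) / (z n ^ 2 / 2 + Real.log (z n ^ 2 / 2)) * (1 - 1 / (z n ^ 2 / 2)) with hm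
  -- basic limits
  have hxtop : Tendsto (fun n => z n ^ 2 / 2) atTop atTop :=
    ((tendsto_pow_atTop two_ne_zero).comp hz).atTop_div_const two_pos
  have hβ0 : Tendsto β atTop (nhds 0) := by
    refine tendsto_of_tendsto_of_tendsto_of_le_of_le' tendsto_const_nhds hβ2
      (Eventually.of_forall fun n => (hβpos n).le) ?_
    filter_upwards [eventually_ge_atTop 1] with n hn
    have h1 : (1:ℝ) ≤ (n:ℝ) := Nat.one_le_cast.2 hn
    nlinarith [hβpos n]
  have hlogeq : ∀ᶠ n in atTop, Real.log (z n ^ 2 / 2)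
      = 2 * Real.log (z n) - Real.log 2 := by
    filter_upwards [hz.eventually_ge_atTop 1] with n hn
    rw [Real.log_div (by positivity) two_ne_zero, Real.log_pow]
    push_cast; ring
  have hε : Tendsto e atTop (nhds 0) := by
    have h1 : Tendsto (fun n => β n * Real.log (z n) - Real.log 2 / 2 * β n) atTop (nhds 0) := by
      have := hβz.sub ((hβ0.const_mul (Real.log 2 / 2)))
      simpa using this
    refine h1.congr' ?_
    filter_upwards [hlogeq] with n hn
    rw [he]; simp only; rw [hn]; ring
  -- g tends to 1
  have hεpos : ∀ᶠ n in atTop, 0 < e n := by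
    filter_upwards [hxtop.eventually_ge_atTop (Real.exp 1)] with n hn
    have hx1 : (1:ℝ) < z n ^ 2 / 2 :=
      lt_of_lt_of_le (by simpa using Real.exp_lt_exp.2 one_pos) hn
    have := Real.log_pos hx1
    have := hβpos n
    rw [he]; positivity
  have hslope : Tendsto (fun t : ℝ => (Real.exp t - 1) / t) (nhdsWithin 0 {(0:ℝ)}ᶜ) (nhds 1) := by
    have h := hasDerivAt_iff_tendsto_slope.mp (Real.hasDerivAt_exp 0)
    have h2 : (fun t : ℝ => (Real.exp t - 1) / t) = slope Real.exp 0 := by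
      funext t; rw [slope_def_field]; simp [div_eq_mul_inv, mul_comm]
    rw [h2]; simpa using h
  have hq : Tendsto (fun n => (Real.exp (e n) - 1) / e n) atTop (nhds 1) := by
    refine hslope.comp (tendsto_nhdsWithin_of_tendsto_nhds_of_eventually_within _ hε ?_)
    filter_upwards [hεpos] with n hn
    exact fun h => absurd h hn.ne'
  have hg1 : Tendsto g atTop (nhds 1) := by
    have h2 : Tendsto (fun n => Real.exp (e n) / ((Real.exp (e n) - 1) / e n) ^ 2)
        atTop (nhds 1) := by
      have hnum : Tendsto (fun n => Real.exp (e n)) atTop (nhds 1) := by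
        have := (Real.continuous_exp.tendsto 0).comp hε
        simpa [Function.comp_def] using this
      have := hnum.div (hq.pow 2) (by norm_num)
      simpa [Pi.div_def] using this
    refine h2.congr' ?_
    filter_upwards [hεpos] with n hn
    have h0 : e n ≠ 0 := hn.ne'
    rw [hg]
    simp only
    field_simp
  -- m tends to 1
  have hm1 : Tendsto m atTop (nhds 1) := by
    have hlogdiv : Tendsto (fun n => Real.log (z n ^ 2 / 2) / (z n ^ 2 / 2)) atTop (nhds 0) :=
      Real.isLittleO_log_id_atTop.tendsto_div_nhds_zero.comp hxtop
    have h1 : Tendsto (fun n => 1 / (1 + Real.log (z n ^ 2 / 2) / (z n ^ 2 / 2))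
        * (1 - 1 / (z n ^ 2 / 2))) atTop (nhds 1) := by
      have ha : Tendsto (fun n => 1 + Real.log (z n ^ 2 / 2) / (z n ^ 2 / 2)) atTop (nhds 1) := by
        simpa using tendsto_const_nhds.add hlogdiv
      have hb : Tendsto (fun n => 1 - 1 / (z n ^ 2 / 2)) atTop (nhds 1) := by
        have := tendsto_inv_atTop_zero.comp hxtop
        simpa [one_div] using tendsto_const_nhds.sub this
      have := ((tendsto_const_nhds (x := (1:ℝ)) (f := atTop)).div ha one_ne_zero).mul hb
      simpa using this
    refine h1.congr' ?_
    filter_upwards [hxtop.eventually_ge_atTop (Real.exp 1)] with n hn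
    have hx1 : (1:ℝ) < z n ^ 2 / 2 :=
      lt_of_lt_of_le (by simpa using Real.exp_lt_exp.2 one_pos) hn
    have hx0 : (0:ℝ) < z n ^ 2 / 2 := by linarith
    have hlp := Real.log_pos hx1
    rw [hm]
    simp only
    congr 1
    rw [show (1:ℝ) + Real.log (z n ^ 2 / 2) / (z n ^ 2 / 2)
        = (z n ^ 2 / 2 + Real.log (z n ^ 2 / 2)) / (z n ^ 2 / 2) from by
          rw [add_div, div_self (ne_of_gt hx0)],
      one_div_div]
  -- squeeze
  have hlow : Tendsto (fun n => m n * g n) atTop (nhds 1) := by simpa using hm1.mul hg1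
  have hhigh : Tendsto (fun n : ℕ => (1 + (n:ℝ) * β n) * g n) atTop (nhds 1) := by
    have h1 : Tendsto (fun n : ℕ => 1 + (n:ℝ) * β n) atTop (nhds 1) := by
      simpa using (tendsto_const_nhds (x := (1:ℝ)) (f := atTop)).add hβ2
    simpa using h1.mul hg1
  have key : ∀ᶠ n in atTop, m n * g n ≤ F n ∧ F n ≤ (1 + (n:ℝ) * β n) * g n := by
    filter_upwards [eventually_ge_atTop 1, hxtop.eventually_ge_atTop (Real.exp 1),
      hβ2.eventually (gt_mem_nhds one_pos)] with n hn1 hxe hnb1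
    simp only [hF, hg, hm, he]
    set x := z n ^ 2 / 2 with hxdef
    set b := β n with hbdef
    set L := Real.log x with hLdef
    set r := x ^ (b / 2) with hrdef
    have hb0 : 0 < b := hβpos n
    have hx1 : (1:ℝ) < x := lt_of_lt_of_le (by simpa using Real.exp_lt_exp.2 one_pos) hxe
    have hx0 : (0:ℝ) < x := by linarith
    have hz2 : z n ^ 2 = 2 * x := by rw [hxdef]; ring
    have hL1 : (1:ℝ) ≤ L := (Real.le_log_iff_exp_le hx0).2 hxe
    have hL0 : (0:ℝ) < L := by linarith
    have hre : Real.exp (b / 2 * L) = r := by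
      rw [hrdef, Real.rpow_def_of_pos hx0]
      congr 1
      rw [hLdef]; ring
    have hr1 : 1 < r := by
      rw [← hre]
      calc (1:ℝ) = Real.exp 0 := Real.exp_zero.symm
        _ < Real.exp (b / 2 * L) := Real.exp_lt_exp.2 (by positivity)
    have hr0 : 0 < r := lt_trans one_pos hr1
    have hrn : x ^ ((n:ℝ) * b / 2) = r ^ n := by
      rw [hrdef, show (n:ℝ) * b / 2 = b / 2 * (n:ℝ) from by ring,
        Real.rpow_mul hx0.le, Real.rpow_natCast]
    rw [hz2, hrn, show -(2 * x) / 2 = -x from by ring, hre]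
    -- positivity of Lambda
    have hsum_pos : 0 < ∑ i ∈ Finset.Icc 1 n, (i:ℝ) * r ^ i := by
      refine Finset.sum_pos (fun i hi => ?_) ⟨1, Finset.mem_Icc.2 ⟨le_refl 1, hn1⟩⟩
      have hi1 := (Finset.mem_Icc.1 hi).1
      have hi0 : (0:ℝ) < (i:ℝ) := by exact_mod_cast hi1
      positivity
    have hCpos : 0 < (n:ℝ) * (r - 1) * r ^ n - r ^ n + 1 := by
      have h1 : 0 < (r - 1) ^ 2 * ∑ i ∈ Finset.Icc 1 n, (i:ℝ) * r ^ i :=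
        mul_pos (pow_pos (sub_pos.2 hr1) 2) hsum_pos
      rw [geom_aux] at h1
      have hCC : (n:ℝ) * (r - 1) * r ^ n - r ^ n + 1
          = (n:ℝ) * r ^ (n+1) - ((n:ℝ)+1) * r ^ n + 1 := by rw [pow_succ]; ring
      rw [← hCC] at h1
      nlinarith [h1, hr0]
    have hTpos : 0 < 4 * Real.exp (-x) / (2 * x)
        * (((n:ℝ) * (r - 1) * r ^ n - r ^ n + 1) / (b * L ^ 2)) := by
      refine mul_pos (div_pos (by positivity) (by linarith)) (div_pos hCpos ?_)
      exact mul_pos hb0 (pow_pos hL0 2)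
    have hsum_eq := sum_eq (n := n) (b := b) hx0 (hrdef ▸ hr1.ne')
    rw [← hrdef] at hsum_eq
    -- sum bounds
    have hS_low : x / (x + L) * (1 - 1 / x)
        * ∑ i ∈ Finset.Icc 1 n, ((i:ℝ) * b / 2) * x ^ ((i:ℝ) * b / 2 - 1) * Real.exp (-x)
        ≤ ∑ i ∈ Finset.Icc 1 n, regIncGamma ((i:ℝ) * b / 2) x := by
      rw [Finset.mul_sum]
      refine Finset.sum_le_sum fun i hi => ?_
      obtain ⟨hi1, hi2⟩ := Finset.mem_Icc.1 hi
      have hi0 : (0:ℝ) < (i:ℝ) := by exact_mod_cast hi1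
      have hin : (i:ℝ) ≤ (n:ℝ) := by exact_mod_cast hi2
      have hia : 0 < (i:ℝ) * b / 2 := by positivity
      have hia2 : (i:ℝ) * b / 2 ≤ 1 / 2 := by nlinarith
      exact (regIncGamma_bounds hxe hia hia2).1
    have hS_high : (∑ i ∈ Finset.Icc 1 n, regIncGamma ((i:ℝ) * b / 2) x)
        ≤ (1 + (n:ℝ) * b)
        * ∑ i ∈ Finset.Icc 1 n, ((i:ℝ) * b / 2) * x ^ ((i:ℝ) * b / 2 - 1) * Real.exp (-x) := by
      rw [Finset.mul_sum]
      refine Finset.sum_le_sum fun i hi => ?_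
      obtain ⟨hi1, hi2⟩ := Finset.mem_Icc.1 hi
      have hi0 : (0:ℝ) < (i:ℝ) := by exact_mod_cast hi1
      have hin : (i:ℝ) ≤ (n:ℝ) := by exact_mod_cast hi2
      have hia : 0 < (i:ℝ) * b / 2 := by positivity
      have hia2 : (i:ℝ) * b / 2 ≤ 1 / 2 := by nlinarith
      refine le_trans (regIncGamma_bounds hxe hia hia2).2 ?_
      have hxp : (0:ℝ) ≤ x ^ ((i:ℝ) * b / 2 - 1) := Real.rpow_nonneg hx0.le _
      have hexp0 : (0:ℝ) ≤ Real.exp (-x) := Real.exp_nonneg _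
      have h12 : 1 + 2 * ((i:ℝ) * b / 2) ≤ 1 + (n:ℝ) * b := by nlinarith
      calc (1 + 2 * ((i:ℝ) * b / 2)) * ((i:ℝ) * b / 2 * x ^ ((i:ℝ) * b / 2 - 1) * Real.exp (-x))
          ≤ (1 + (n:ℝ) * b) * ((i:ℝ) * b / 2 * x ^ ((i:ℝ) * b / 2 - 1) * Real.exp (-x)) := by
            refine mul_le_mul_of_nonneg_right h12 (by positivity)
        _ = (1 + (n:ℝ) * b) * ((i:ℝ) * b / 2 * x ^ ((i:ℝ) * b / 2 - 1) * Real.exp (-x)) := rfl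
    have hxL : x + L ≠ 0 := by linarith
    have hr1' : r - 1 ≠ 0 := sub_ne_zero.2 hr1.ne'
    constructor
    · rw [le_div_iff₀ hTpos]
      refine le_trans (le_of_eq ?_) hS_low
      rw [hsum_eq]
      field_simp
      ring
    · rw [div_le_iff₀ hTpos]
      refine le_trans hS_high (le_of_eq ?_)
      rw [hsum_eq]
      field_simp
      ring
  exact tendsto_of_tendsto_of_tendsto_of_le_of_le' hlow hhigh
    (key.mono fun n h => h.1) (key.mono fun n h => h.2)
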